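/- Let H be an infinite-dimensional Hilbert space and let Φ and Ψ be automorphisms of the Calkin algebra C(H) that agree on the corner ṗ C(H) ṗ for every projection p ∈ B(H) with separable range (where ṗ denotes the image of p in C(H)). Then Φ = Ψ. -/

import Mathlib

open ContinuousLinearMap

variable (H : Type*) [NormedAddCommGroup H] [InnerProductSpace ℂ H] [CompleteSpace H]

/-- The two-sided ideal of compact operators in `B(H)`. -/
noncomputable def compactIdeal : TwoSidedIdeal (H →L[ℂ] H) :=
  TwoSidedIdeal.mk' {a : H →L[ℂ] H | IsCompactOperator ⇑a}
    (by simpa using isCompactOperator_zero)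
    (fun hx hy => by simpa using hx.add hy)
    (fun hx => by simpa using hx.neg)
    (fun {x y} hy => by simpa [Function.comp] using hy.clm_comp x)
    (fun {x y} hx => by simpa [Function.comp] using hx.comp_clm y)

/-- The Calkin algebra `C(H) = B(H)/K(H)` (as a quotient ring). -/
def Calkin : Type _ := (compactIdeal H).ringCon.Quotient

noncomputable instance : Ring (Calkin H) :=
  inferInstanceAs (Ring (compactIdeal H).ringCon.Quotient)

/-- The quotient map `B(H) → C(H)`, `a ↦ ȧ`. -/
noncomputable def calkinMk : (H →L[ℂ] H) →+* Calkin H := (compactIdeal H).ringCon.mk'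

/-- Every countable family of vectors is contained in a closed separable subspace invariant
under a given operator. -/
lemma exists_closed_separable_invariant_subspace
    {H : Type*} [NormedAddCommGroup H] [InnerProductSpace ℂ H]
    (c : H →L[ℂ] H) (x : ℕ → H) :
    ∃ K : Submodule ℂ H, IsClosed (K : Set H) ∧ TopologicalSpace.IsSeparable (K : Set H) ∧
      (∀ y ∈ K, c y ∈ K) ∧ ∀ n, x n ∈ K := by
  set T : Set H := Set.range (fun nk : ℕ × ℕ => (⇑c)^[nk.2] (x nk.1)) with hT
  have hTc : Set.Countable T := Set.countable_range _
  refine ⟨(Submodule.span ℂ T).topologicalClosure,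
    Submodule.isClosed_topologicalClosure _, ?_, ?_, ?_⟩
  · have hsep : TopologicalSpace.IsSeparable (Submodule.span ℂ T : Set H) :=
      hTc.isSeparable.span
    have := hsep.closure
    rwa [← Submodule.topologicalClosure_coe] at this
  · intro y hy
    have hmaps : Set.MapsTo ⇑c (Submodule.span ℂ T : Set H) (Submodule.span ℂ T : Set H) := by
      intro z hz
      have hle : Submodule.span ℂ T ≤ (Submodule.span ℂ T).comap (c : H →ₗ[ℂ] H) := by
        rw [Submodule.span_le]
        rintro - ⟨⟨n, k⟩, rfl⟩
        simp only [Set.mem_preimage, SetLike.mem_coe, Submodule.mem_comap,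
          ContinuousLinearMap.coe_coe]
        exact Submodule.subset_span ⟨(n, k + 1), Function.iterate_succ_apply' ⇑c k (x n)⟩
      exact hle hz
    have hy' : y ∈ closure (Submodule.span ℂ T : Set H) := by
      rwa [← Submodule.topologicalClosure_coe]
    have : c y ∈ closure (Submodule.span ℂ T : Set H) :=
      map_mem_closure c.continuous hy' hmaps
    rwa [← Submodule.topologicalClosure_coe] at this
  · intro n
    exact Submodule.le_topologicalClosure _ (Submodule.subset_span ⟨(n, 0), rfl⟩)

/-- If all separable corners of an operator are compact, the operator is compact. -/
lemma isCompactOperator_of_separable_corners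
    {H : Type*} [NormedAddCommGroup H] [InnerProductSpace ℂ H] [CompleteSpace H]
    (c : H →L[ℂ] H)
    (h : ∀ p : H →L[ℂ] H, p ∘L p = p → adjoint p = p →
      TopologicalSpace.IsSeparable (Set.range ⇑p) → IsCompactOperator ⇑(p ∘L c ∘L p)) :
    IsCompactOperator ⇑c := by
  rw [isCompactOperator_iff_exists_mem_nhds_isCompact_closure_image]
  refine ⟨Metric.closedBall 0 1, Metric.closedBall_mem_nhds _ one_pos, ?_⟩
  set S : Set H := ⇑c '' Metric.closedBall 0 1 with hS
  have hseq : IsSeqCompact (closure S) := by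
    intro u hu
    have happrox : ∀ n : ℕ, ∃ z ∈ Metric.closedBall (0 : H) 1,
        dist (u n) (c z) < 1 / (n + 1) := by
      intro n
      obtain ⟨v, hvS, hv⟩ := Metric.mem_closure_iff.mp (hu n) (1 / (n + 1)) (by positivity)
      obtain ⟨z, hz, rfl⟩ := hvS
      exact ⟨z, hz, hv⟩
    choose x hx hdx using happrox
    obtain ⟨K, hKc, hKsep, hKinv, hKx⟩ := exists_closed_separable_invariant_subspace c x
    haveI : CompleteSpace K := hKc.completeSpace_coe
    set p : H →L[ℂ] H := K.subtypeL ∘L K.orthogonalProjection with hp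
    have hpmem : ∀ y, p y ∈ K := fun y => SetLike.coe_mem (K.orthogonalProjection y)
    have hpeq : ∀ y ∈ K, p y = y := by
      intro y hy
      have : K.orthogonalProjection ((⟨y, hy⟩ : K) : H) = ⟨y, hy⟩ :=
        Submodule.orthogonalProjection_mem_subspace_eq_self _
      simpa [hp] using congrArg Subtype.val this
    have hidem : p ∘L p = p := by
      ext y
      exact hpeq _ (hpmem y)
    have hadj : adjoint p = p := by
      have : IsSelfAdjoint p := isSelfAdjoint_starProjection K
      rwa [IsSelfAdjoint, ContinuousLinearMap.star_eq_adjoint] at this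
    have hsep : TopologicalSpace.IsSeparable (Set.range ⇑p) :=
      hKsep.mono (by rintro - ⟨y, rfl⟩; exact hpmem y)
    have hcpt := h p hidem hadj hsep
    have himg : IsCompact (closure (⇑(p ∘L c ∘L p) '' Metric.closedBall 0 1)) :=
      hcpt.isCompact_closure_image_closedBall 1
    have hxin : ∀ n, c (x n) ∈ closure (⇑(p ∘L c ∘L p) '' Metric.closedBall 0 1) := by
      intro n
      apply subset_closure
      refine ⟨x n, hx n, ?_⟩
      simp only [ContinuousLinearMap.comp_apply]
      rw [hpeq _ (hKx n), hpeq _ (hKinv _ (hKx n))]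
    obtain ⟨L, _, φ, hφ, hconv⟩ := himg.isSeqCompact hxin
    refine ⟨L, ?_, φ, hφ, ?_⟩
    · refine mem_closure_of_tendsto hconv (Filter.Eventually.of_forall fun n => ?_)
      exact ⟨x (φ n), hx _, rfl⟩
    · have hdist : Filter.Tendsto (fun n => dist ((fun k => c (x k)) (φ n)) (u (φ n)))
          Filter.atTop (nhds 0) := by
        refine squeeze_zero (fun n => dist_nonneg) (fun n => ?_)
          tendsto_one_div_add_atTop_nhds_zero_nat
        rw [dist_comm]
        refine le_trans (le_of_lt (hdx (φ n))) ?_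
        gcongr
        exact_mod_cast hφ.le_apply
      exact hconv.congr_dist hdist
  exact hseq.isCompact

theorem calkinMk_eq_iff {H : Type*} [NormedAddCommGroup H] [InnerProductSpace ℂ H]
    [CompleteSpace H] (a b : H →L[ℂ] H) :
    calkinMk H a = calkinMk H b ↔ IsCompactOperator ⇑(a - b) := by
  show ((a : (compactIdeal H).ringCon.Quotient) = b) ↔ _
  rw [RingCon.eq, TwoSidedIdeal.rel_iff]
  exact TwoSidedIdeal.mem_mk' _ _ _ _ _ _ _

/-- two automorphisms of the Calkin algebra of an infinite-dimensional Hilbert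
space agreeing on the corner `ṗ C(H) ṗ` for every projection `p` with separable range are
equal. -/
theorem calkin_aut_eq_of_eq_on_separable_corners
    {H : Type*} [NormedAddCommGroup H] [InnerProductSpace ℂ H] [CompleteSpace H]
    (hinf : ¬ FiniteDimensional ℂ H)
    (Φ Ψ : Calkin H ≃+* Calkin H)
    (h : ∀ p : H →L[ℂ] H, p ∘L p = p → adjoint p = p →
      TopologicalSpace.IsSeparable (Set.range ⇑p) →
      ∀ x : Calkin H, Φ (calkinMk H p * x * calkinMk H p) = Ψ (calkinMk H p * x * calkinMk H p)) :
    Φ = Ψ := by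
  have key : ∀ z : Calkin H, Φ.symm (Ψ z) = z := by
    intro z
    obtain ⟨a, rfl⟩ : ∃ a, calkinMk H a = z := Quotient.exists_rep z
    obtain ⟨b, hb⟩ : ∃ b, calkinMk H b = Φ.symm (Ψ (calkinMk H a)) :=
      Quotient.exists_rep _
    have hcorner : ∀ p : H →L[ℂ] H, p ∘L p = p → adjoint p = p →
        TopologicalSpace.IsSeparable (Set.range ⇑p) →
        IsCompactOperator ⇑(p ∘L (b - a) ∘L p) := by
      intro p h1 h2 h3
      have hfix : ∀ x : Calkin H,
          Φ.symm (Ψ (calkinMk H p * x * calkinMk H p)) = calkinMk H p * x * calkinMk H p :=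
        fun x => by rw [← h p h1 h2 h3 x]; exact Φ.symm_apply_apply _
      have hppp : calkinMk H p * calkinMk H p * calkinMk H p = calkinMk H p := by
        rw [← map_mul, ← map_mul]
        congr 1
        show (p ∘L p) ∘L p = p
        rw [h1, h1]
      have hpfix : Φ.symm (Ψ (calkinMk H p)) = calkinMk H p := by
        have := hfix (calkinMk H p)
        rwa [hppp] at this
      have hmid : calkinMk H p * (Φ.symm (Ψ (calkinMk H a))) * calkinMk H p
          = calkinMk H p * calkinMk H a * calkinMk H p := by
        calc calkinMk H p * (Φ.symm (Ψ (calkinMk H a))) * calkinMk H p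
            = Φ.symm (Ψ (calkinMk H p)) * (Φ.symm (Ψ (calkinMk H a)))
              * Φ.symm (Ψ (calkinMk H p)) := by rw [hpfix]
          _ = Φ.symm (Ψ (calkinMk H p * calkinMk H a * calkinMk H p)) := by
              simp [map_mul]
          _ = calkinMk H p * calkinMk H a * calkinMk H p := hfix _
      rw [← hb] at hmid
      have hmk : calkinMk H (p ∘L b ∘L p) = calkinMk H (p ∘L a ∘L p) := by
        have e1 : calkinMk H (p ∘L b ∘L p) = calkinMk H p * calkinMk H b * calkinMk H p := by
          rw [← map_mul, ← map_mul]; rfl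
        have e2 : calkinMk H (p ∘L a ∘L p) = calkinMk H p * calkinMk H a * calkinMk H p := by
          rw [← map_mul, ← map_mul]; rfl
        rw [e1, e2]; exact hmid
      have hc := (calkinMk_eq_iff _ _).mp hmk
      have : p ∘L b ∘L p - p ∘L a ∘L p = p ∘L (b - a) ∘L p := by
        ext y; simp
      rwa [this] at hc
    have hcompact : IsCompactOperator ⇑(b - a) :=
      isCompactOperator_of_separable_corners _ hcorner
    rw [← hb]
    exact (calkinMk_eq_iff _ _).mpr hcompact
  ext x
  have := key x
  have := congrArg Φ this
  rw [Φ.apply_symm_apply] at this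
  exact this.symm
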